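/- For every integer n ≥ 4 there exists an n-point metric space M such that no 4-point subspace of M embeds isometrically into the Hilbert space ℓ_2. (Consequently R_2(n) = 3 for n ≥ 3, since every 3-point metric space embeds isometrically into ℓ_2.) -/

import Mathlib

open scoped ENNReal

/-- `d` is a metric (distance function) on `α`. -/
def IsMetricDist {α : Type*} (d : α → α → ℝ) : Prop :=
  (∀ x y, d x y = 0 ↔ x = y) ∧ (∀ x y, d x y = d y x) ∧
    (∀ x y z, d x z ≤ d x y + d y z)

lemma aux_ineq (c1 c2 c3 c4 : ℝ) (pc1 : 0 < c1)
    (hcc2 : 4 * c1 ≤ c2) (hcc3 : 4 * c2 ≤ c3) (hcc4 : 4 * c3 ≤ c4) :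
    (c1 + c2 + c3 + c4) ^ 2 < 2 * (c1 ^ 2 + c2 ^ 2 + c3 ^ 2 + c4 ^ 2) := by
  have pc2 : 0 < c2 := by linarith
  have pc3 : 0 < c3 := by linarith
  have pc4 : 0 < c4 := by linarith
  have h13 : 16 * c1 ≤ c3 := by linarith
  have h14 : 64 * c1 ≤ c4 := by linarith
  have h24 : 16 * c2 ≤ c4 := by linarith
  have p12 : 0 ≤ (c2 - 4 * c1) * c2 := mul_nonneg (by linarith) (by linarith)
  have p13 : 0 ≤ (c3 - 16 * c1) * c3 := mul_nonneg (by linarith) (by linarith)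
  have p14 : 0 ≤ (c4 - 64 * c1) * c4 := mul_nonneg (by linarith) (by linarith)
  have p23 : 0 ≤ (c3 - 4 * c2) * c3 := mul_nonneg (by linarith) (by linarith)
  have p24 : 0 ≤ (c4 - 16 * c2) * c4 := mul_nonneg (by linarith) (by linarith)
  have p34 : 0 ≤ (c4 - 4 * c3) * c4 := mul_nonneg (by linarith) (by linarith)
  nlinarith [p12, p13, p14, p23, p24, p34, mul_pos pc1 pc1]

lemma aux_cert (a1 a2 a3 a4 c1 c2 c3 c4 s1 s2 t1 t2 t3 : ℝ)
    (pa1 : 0 < a1) (pa2 : 0 < a2) (pa3 : 0 < a3) (pa4 : 0 < a4)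
    (s12 : 4 * a2 ≤ a1) (s23 : 4 * a3 ≤ a2) (s34 : 4 * a4 ≤ a3)
    (hc1 : c1 = a2 * a3 * a4) (hc2 : c2 = a1 * a3 * a4)
    (hc3 : c3 = a1 * a2 * a4) (hc4 : c4 = a1 * a2 * a3)
    (hs1 : s1 = c1 + c2 + c3 + c4) (hs2 : s2 = c1 ^ 2 + c2 ^ 2 + c3 ^ 2 + c4 ^ 2)
    (ht1 : t1 = c1 * (s1 * c1 - s2)) (ht2 : t2 = c2 * (s1 * c2 - s2))
    (ht3 : t3 = c3 * (s1 * c3 - s2))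
    (hnn : 0 ≤ t1 ^ 2 * (a1 + a4) ^ 2 + t2 ^ 2 * (a2 + a4) ^ 2 + t3 ^ 2 * (a3 + a4) ^ 2 +
      t1 * t2 * ((a1 + a4) ^ 2 + (a2 + a4) ^ 2 - (a1 + a2) ^ 2) +
      t1 * t3 * ((a1 + a4) ^ 2 + (a3 + a4) ^ 2 - (a1 + a3) ^ 2) +
      t2 * t3 * ((a2 + a4) ^ 2 + (a3 + a4) ^ 2 - (a2 + a3) ^ 2)) : False := by
  have pc1 : 0 < c1 := by rw [hc1]; positivity
  have hcc2 : 4 * c1 ≤ c2 := by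
    rw [hc1, hc2]
    have h := mul_le_mul_of_nonneg_right s12 (show (0:ℝ) ≤ a3 * a4 by positivity)
    linarith [h]
  have hcc3 : 4 * c2 ≤ c3 := by
    rw [hc2, hc3]
    have h := mul_le_mul_of_nonneg_right s23 (show (0:ℝ) ≤ a1 * a4 by positivity)
    linarith [h]
  have hcc4 : 4 * c3 ≤ c4 := by
    rw [hc3, hc4]
    have h := mul_le_mul_of_nonneg_right s34 (show (0:ℝ) ≤ a1 * a2 by positivity)
    linarith [h]
  have hkeyineq : s1 ^ 2 < 2 * s2 := by
    rw [hs1, hs2]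
    exact aux_ineq c1 c2 c3 c4 pc1 hcc2 hcc3 hcc4
  have ps2 : 0 < s2 := by rw [hs2]; positivity
  have hkey : t1 ^ 2 * (a1 + a4) ^ 2 + t2 ^ 2 * (a2 + a4) ^ 2 + t3 ^ 2 * (a3 + a4) ^ 2 +
      t1 * t2 * ((a1 + a4) ^ 2 + (a2 + a4) ^ 2 - (a1 + a2) ^ 2) +
      t1 * t3 * ((a1 + a4) ^ 2 + (a3 + a4) ^ 2 - (a1 + a3) ^ 2) +
      t2 * t3 * ((a2 + a4) ^ 2 + (a3 + a4) ^ 2 - (a2 + a3) ^ 2) =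
      -((a1 * a2 * a3 * a4) ^ 2 * ((4 * s2 - s1 ^ 2) * (2 * s2 - s1 ^ 2))) := by
    rw [ht1, ht2, ht3, hs1, hs2, hc1, hc2, hc3, hc4]
    ring
  have hpos : 0 < (a1 * a2 * a3 * a4) ^ 2 * ((4 * s2 - s1 ^ 2) * (2 * s2 - s1 ^ 2)) := by
    have h1 : 0 < 4 * s2 - s1 ^ 2 := by linarith
    have h2 : 0 < 2 * s2 - s1 ^ 2 := by linarith
    have h3 : 0 < (a1 * a2 * a3 * a4) ^ 2 := by positivity
    exact mul_pos h3 (mul_pos h1 h2)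
  linarith

open RealInnerProductSpace in
set_option maxHeartbeats 4000000 in
/-- For every `n ≥ 4` there exists an `n`-point metric space (a metric `d` on `Fin n`)
such that no 4-point subspace embeds isometrically into the Hilbert space `ℓ₂`. -/
theorem stmt12 (n : ℕ) (hn : 4 ≤ n) :
    ∃ d : Fin n → Fin n → ℝ, IsMetricDist d ∧
      ∀ S : Finset (Fin n), S.card = 4 →
        ¬ ∃ f : Fin n → lp (fun _ : ℕ => ℝ) 2,
            ∀ x ∈ S, ∀ y ∈ S, ‖f x - f y‖ = d x y := by
  classical
  set H : Fin n → ℝ := fun i => (4 : ℝ) ^ (n - i.val) with hH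
  have hHpos : ∀ i : Fin n, 0 < H i := fun i => pow_pos (by norm_num) _
  refine ⟨fun x y => if x = y then 0 else H x + H y, ⟨?_, ?_, ?_⟩, ?_⟩
  · intro x y
    by_cases h : x = y
    · simp [h]
    · have := hHpos x
      have := hHpos y
      simp only [if_neg h]
      constructor
      · intro h0; exfalso; linarith
      · intro h0; exact absurd h0 h
  · intro x y
    by_cases h : x = y
    · simp [h]
    · dsimp only; rw [if_neg h, if_neg (Ne.symm h)]; ring
  · intro x y z
    have hx := hHpos x; have hy := hHpos y; have hz := hHpos z
    dsimp only
    split_ifs <;> subst_vars <;> first | linarith | simp_all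
  · intro S hS
    rintro ⟨f, hf⟩
    have hl : (S.sort (· ≤ ·)).length = 4 := by rw [Finset.length_sort, hS]
    have hsorted : List.Pairwise (· < ·) (S.sort (· ≤ ·)) := S.sortedLT_sort.pairwise
    have hmem : ∀ x ∈ S.sort (· ≤ ·), x ∈ S := fun x hx => (Finset.mem_sort _).1 hx
    obtain ⟨k1, k2, k3, k4, hL⟩ : ∃ a b c e, S.sort (· ≤ ·) = [a, b, c, e] := by
      rcases hsl : S.sort (· ≤ ·) with _ | ⟨a, _ | ⟨b, _ | ⟨c, _ | ⟨e, _ | ⟨g, t⟩⟩⟩⟩⟩ <;>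
        rw [hsl] at hl <;> simp at hl
      exact ⟨a, b, c, e, rfl⟩
    rw [hL] at hsorted hmem
    have m1 : k1 ∈ S := hmem k1 (by simp)
    have m2 : k2 ∈ S := hmem k2 (by simp)
    have m3 : k3 ∈ S := hmem k3 (by simp)
    have m4 : k4 ∈ S := hmem k4 (by simp)
    simp only [List.pairwise_cons, List.mem_cons, List.not_mem_nil, or_false,
      List.mem_singleton, forall_eq_or_imp, forall_eq, List.Pairwise.nil, and_true] at hsorted
    obtain ⟨⟨h12, h13, h14⟩, ⟨h23, h24⟩, h34, -⟩ := hsorted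
    -- abbreviations for the four "heights"
    set a1 : ℝ := H k1 with ha1
    set a2 : ℝ := H k2 with ha2
    set a3 : ℝ := H k3 with ha3
    set a4 : ℝ := H k4 with ha4
    have pa1 : 0 < a1 := hHpos k1
    have pa2 : 0 < a2 := hHpos k2
    have pa3 : 0 < a3 := hHpos k3
    have pa4 : 0 < a4 := hHpos k4
    -- geometric separation
    have hsep : ∀ p q : Fin n, p < q → 4 * H q ≤ H p := by
      intro p q hpq
      have hq : q.val < n := q.isLt
      have hpq' : p.val < q.val := hpq
      have h1 : (4 : ℝ) * 4 ^ (n - q.val) = 4 ^ ((n - q.val) + 1) := by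
        rw [pow_succ]; ring
      rw [hH]
      simp only
      rw [h1]
      exact pow_le_pow_right₀ (by norm_num) (by omega)
    have s12 : 4 * a2 ≤ a1 := hsep k1 k2 h12
    have s23 : 4 * a3 ≤ a2 := hsep k2 k3 h23
    have s34 : 4 * a4 ≤ a3 := hsep k3 k4 h34
    -- the six distances
    have dist : ∀ (p q : Fin n), p ∈ S → q ∈ S → p ≠ q → ‖f p - f q‖ = H p + H q := by
      intro p q hp hq hpq
      have := hf p hp q hq
      simpa [if_neg hpq] using this
    have d12 : ‖f k1 - f k2‖ = a1 + a2 := dist k1 k2 m1 m2 (ne_of_lt h12)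
    have d13 : ‖f k1 - f k3‖ = a1 + a3 := dist k1 k3 m1 m3 (ne_of_lt h13)
    have d14 : ‖f k1 - f k4‖ = a1 + a4 := dist k1 k4 m1 m4 (ne_of_lt h14)
    have d23 : ‖f k2 - f k3‖ = a2 + a3 := dist k2 k3 m2 m3 (ne_of_lt h23)
    have d24 : ‖f k2 - f k4‖ = a2 + a4 := dist k2 k4 m2 m4 (ne_of_lt h24)
    have d34 : ‖f k3 - f k4‖ = a3 + a4 := dist k3 k4 m3 m4 (ne_of_lt h34)
    clear_value a1 a2 a3 a4
    -- certificate coefficients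
    set c1 : ℝ := a2 * a3 * a4 with hc1
    set c2 : ℝ := a1 * a3 * a4 with hc2
    set c3 : ℝ := a1 * a2 * a4 with hc3
    set c4 : ℝ := a1 * a2 * a3 with hc4
    set s1 : ℝ := c1 + c2 + c3 + c4 with hs1
    set s2 : ℝ := c1 ^ 2 + c2 ^ 2 + c3 ^ 2 + c4 ^ 2 with hs2
    set t1 : ℝ := c1 * (s1 * c1 - s2) with ht1
    set t2 : ℝ := c2 * (s1 * c2 - s2) with ht2
    set t3 : ℝ := c3 * (s1 * c3 - s2) with ht3
    clear_value c1 c2 c3 c4 s1 s2 t1 t2 t3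
    -- the vectors
    set u : lp (fun _ : ℕ => ℝ) 2 := f k1 - f k4 with hu
    set v : lp (fun _ : ℕ => ℝ) 2 := f k2 - f k4 with hv
    set w : lp (fun _ : ℕ => ℝ) 2 := f k3 - f k4 with hw
    have huv : u - v = f k1 - f k2 := by rw [hu, hv]; abel
    have huw : u - w = f k1 - f k3 := by rw [hu, hw]; abel
    have hvw : v - w = f k2 - f k3 := by rw [hv, hw]; abel
    have nu : ‖u‖ ^ 2 = (a1 + a4) ^ 2 := by rw [hu, d14]
    have nv : ‖v‖ ^ 2 = (a2 + a4) ^ 2 := by rw [hv, d24]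
    have nw : ‖w‖ ^ 2 = (a3 + a4) ^ 2 := by rw [hw, d34]
    clear_value u v w
    have iuv : 2 * ⟪u, v⟫ = (a1 + a4) ^ 2 + (a2 + a4) ^ 2 - (a1 + a2) ^ 2 := by
      have h := norm_sub_sq_real u v
      rw [huv, d12, nu, nv] at h
      linarith
    have iuw : 2 * ⟪u, w⟫ = (a1 + a4) ^ 2 + (a3 + a4) ^ 2 - (a1 + a3) ^ 2 := by
      have h := norm_sub_sq_real u w
      rw [huw, d13, nu, nw] at h
      linarith
    have ivw : 2 * ⟪v, w⟫ = (a2 + a4) ^ 2 + (a3 + a4) ^ 2 - (a2 + a3) ^ 2 := by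
      have h := norm_sub_sq_real v w
      rw [hvw, d23, nv, nw] at h
      linarith
    have hexp : ‖t1 • u + t2 • v + t3 • w‖ ^ 2 =
        t1 ^ 2 * ‖u‖ ^ 2 + t2 ^ 2 * ‖v‖ ^ 2 + t3 ^ 2 * ‖w‖ ^ 2 +
          t1 * t2 * (2 * ⟪u, v⟫) + t1 * t3 * (2 * ⟪u, w⟫) + t2 * t3 * (2 * ⟪v, w⟫) := by
      rw [← real_inner_self_eq_norm_sq]
      simp only [inner_add_left, inner_add_right, real_inner_smul_left, real_inner_smul_right,
        real_inner_self_eq_norm_sq, norm_smul, Real.norm_eq_abs, mul_pow, sq_abs]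
      rw [real_inner_comm v u, real_inner_comm w u, real_inner_comm w v]
      ring
    have hnn : (0 : ℝ) ≤ ‖t1 • u + t2 • v + t3 • w‖ ^ 2 := sq_nonneg _
    rw [hexp, nu, nv, nw, iuv, iuw, ivw] at hnn
    exact aux_cert a1 a2 a3 a4 c1 c2 c3 c4 s1 s2 t1 t2 t3 pa1 pa2 pa3 pa4 s12 s23 s34
      hc1 hc2 hc3 hc4 hs1 hs2 ht1 ht2 ht3 hnn
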